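/- arXiv:2511.03142 — 2 statements merged into one kernel-verified Lean document; each statement's English description precedes it below -/
import Mathlib

section
/- Under Assumptions 1 and 2, the unique fixed point c* ∈ 𝒞 of the time iteration operator T satisfies: for every z ∈ Z, both the optimal consumption function w ↦ c*(w,z) and the optimal savings function w ↦ w − c*(w,z) are increasing on (0,∞). -/
open MeasureTheory Set Filter
open scoped ENNReal

/-- Spectral radius of a real square matrix: the maximum modulus of its
complex eigenvalues (roots of the characteristic polynomial over `ℂ`). -/
noncomputable def specRad {n : Type} [Fintype n] [DecidableEq n] (A : Matrix n n ℝ) : ℝ :=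
  sSup {x : ℝ | ∃ μ : ℂ, (A.map (fun a : ℝ => (a : ℂ))).charpoly.IsRoot μ ∧ x = ‖μ‖}

/-- The optimal savings model with preference shocks: a finite Markov state
space `Z`, innovation space `E` with probability measure `π`, discount factor,
return and income functions `β, R, Y`, and a utility `u` satisfying
Assumption 1 (where `u'`, `u''` are the first and second derivatives). -/
structure SavingsModel (Z : Type) (E : Type) [Fintype Z] [MeasurableSpace E] where
  P : Z → Z → ℝ
  π : Measure E
  π_prob : IsProbabilityMeasure π
  β : Z → Z → E → ℝ
  R : Z → Z → E → ℝ
  Y : Z → Z → E → ℝ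
  β_nonneg : ∀ z zh ε, 0 ≤ β z zh ε
  R_nonneg : ∀ z zh ε, 0 ≤ R z zh ε
  Y_nonneg : ∀ z zh ε, 0 ≤ Y z zh ε
  β_meas : ∀ z zh, Measurable (β z zh)
  R_meas : ∀ z zh, Measurable (R z zh)
  Y_meas : ∀ z zh, Measurable (Y z zh)
  P_nonneg : ∀ z zh, 0 ≤ P z zh
  P_rowsum : ∀ z, ∑ zh, P z zh = 1
  u : ℝ → Z → ℝ
  u' : ℝ → Z → ℝ
  u'' : ℝ → Z → ℝ
  u_deriv : ∀ z, ∀ c : ℝ, 0 < c → HasDerivAt (fun x => u x z) (u' c z) c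
  u'_deriv : ∀ z, ∀ c : ℝ, 0 < c → HasDerivAt (fun x => u' x z) (u'' c z) c
  u'_pos : ∀ z, ∀ c : ℝ, 0 < c → 0 < u' c z
  u''_neg : ∀ z, ∀ c : ℝ, 0 < c → u'' c z < 0
  u'_infty : ∀ z, Tendsto (fun c => u' c z) (nhdsWithin 0 (Ioi 0)) atTop
  u'_lt_one : ∀ z, ∀ᶠ c in atTop, u' c z < 1

namespace SavingsModel

variable {Z E : Type} [Fintype Z] [MeasurableSpace E] (M : SavingsModel Z E)

/-- The conditional expectation operator `E_z[g(β̂, R̂, Ŷ, Ẑ)]`, with values in `[0,∞]`. -/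
noncomputable def Ez (g : ℝ → ℝ → ℝ → Z → ℝ) (z : Z) : ℝ≥0∞ :=
  ∑ zh, ENNReal.ofReal (M.P z zh) *
    ∫⁻ ε, ENNReal.ofReal (g (M.β z zh ε) (M.R z zh ε) (M.Y z zh ε) zh) ∂M.π

/-- Real-valued version of the conditional expectation operator. -/
noncomputable def EzR (g : ℝ → ℝ → ℝ → Z → ℝ) (z : Z) : ℝ := (M.Ez g z).toReal

/-- Assumption 2(i): finiteness of `E_z[u'(Ŷ,Ẑ)]` and `E_z[β̂ R̂ u'(Ŷ,Ẑ)]`. -/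
def Assumption2i : Prop :=
  ∀ z, M.Ez (fun _ _ y zh => M.u' y zh) z < ⊤ ∧
    M.Ez (fun b r y zh => b * r * M.u' y zh) z < ⊤

/-- The matrix `K(1)` with entries `P(z,zh) ∫ β(z,zh,ε) R(z,zh,ε) dπ(ε)`. -/
noncomputable def K1 : Matrix Z Z ℝ := fun z zh =>
  M.P z zh * (∫⁻ ε, ENNReal.ofReal (M.β z zh ε * M.R z zh ε) ∂M.π).toReal

/-- The candidate class `𝒞` of consumption functions. -/
def cC : Set (ℝ → Z → ℝ) :=
  {c | (∀ z, ContinuousOn (fun w => c w z) (Ioi 0)) ∧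
    (∀ z, MonotoneOn (fun w => c w z) (Ioi 0)) ∧
    (∀ z, ∀ w : ℝ, 0 < w → 0 < c w z ∧ c w z ≤ w) ∧
    (∃ B : ℝ, ∀ z, ∀ w : ℝ, 0 < w → |M.u' (c w z) z - M.u' w z| ≤ B)}

/-- The metric `ρ` on `𝒞`: supremum distance in marginal utility terms. -/
noncomputable def ρ (c₁ c₂ : ℝ → Z → ℝ) : ℝ :=
  sSup {x : ℝ | ∃ z : Z, ∃ w : ℝ, 0 < w ∧ x = |M.u' (c₁ w z) z - M.u' (c₂ w z) z|}

/-- State-wise supremum distance (in marginal utility terms) at state `z`. -/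
noncomputable def dz (c₁ c₂ : ℝ → Z → ℝ) (z : Z) : ℝ :=
  sSup {x : ℝ | ∃ w : ℝ, 0 < w ∧ x = |M.u' (c₁ w z) z - M.u' (c₂ w z) z|}

/-- `ξ` solves the time-iteration (Euler) equation at `(w, z)` given
continuation consumption `c`. -/
def IsEulerSol (c : ℝ → Z → ℝ) (w : ℝ) (z : Z) (ξ : ℝ) : Prop :=
  ξ ∈ Ioc 0 w ∧
    M.u' ξ z =
      max (M.EzR (fun b r y zh => b * r * M.u' (c (r * (w - ξ) + y) zh) zh) z) (M.u' w z)

/-- `Tc` is the image of `c` under the time iteration operator. -/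
def IsTimeIterOf (c Tc : ℝ → Z → ℝ) : Prop :=
  ∀ z : Z, ∀ w : ℝ, 0 < w → M.IsEulerSol c w z (Tc w z)

end SavingsModel

section Aux

variable {Z E : Type} [Fintype Z] [MeasurableSpace E]

/-- `u'` is strictly decreasing on `(0,∞)`. -/
lemma aux_u'_strictAntiOn (M : SavingsModel Z E) (z : Z) :
    StrictAntiOn (fun c => M.u' c z) (Ioi 0) := by
  apply strictAntiOn_of_deriv_neg (convex_Ioi 0)
  · exact fun x hx => ((M.u'_deriv z x hx).differentiableAt.continuousAt).continuousWithinAt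
  · intro x hx
    rw [interior_Ioi] at hx
    rw [(M.u'_deriv z x hx).deriv]
    exact M.u''_neg z x hx

/-- Monotonicity of the conditional expectation operator in the integrand. -/
lemma aux_Ez_mono (M : SavingsModel Z E) (g₁ g₂ : ℝ → ℝ → ℝ → Z → ℝ) (z : Z)
    (h : ∀ zh ε, ENNReal.ofReal (g₁ (M.β z zh ε) (M.R z zh ε) (M.Y z zh ε) zh)
        ≤ ENNReal.ofReal (g₂ (M.β z zh ε) (M.R z zh ε) (M.Y z zh ε) zh)) :
    M.Ez g₁ z ≤ M.Ez g₂ z :=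
  Finset.sum_le_sum fun zh _ => mul_le_mul_right (lintegral_mono fun ε => h zh ε) _

/-- Key step: if savings at the larger wealth level `b` are positive, then
savings at a smaller wealth level `a` cannot exceed them. -/
lemma aux_savings_step (M : SavingsModel Z E) (cstar : ℝ → Z → ℝ)
    (hmem : cstar ∈ M.cC) (hfix : M.IsTimeIterOf cstar cstar)
    (z : Z) (a b : ℝ) (ha : 0 < a) (hab : a < b)
    (hsb : 0 < b - cstar b z) : a - cstar a z ≤ b - cstar b z := by
  by_contra hlt
  push_neg at hlt
  obtain ⟨hcont, hmono, hbound, _⟩ := hmem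
  have hb : 0 < b := ha.trans hab
  obtain ⟨hξa, hEa⟩ := hfix z a ha
  obtain ⟨hξb, hEb⟩ := hfix z b hb
  have hsa : 0 < a - cstar a z := hsb.trans hlt
  have hξab : cstar a z < cstar b z := by linarith
  have hca : 0 < cstar a z := hξa.1
  have hcb : 0 < cstar b z := hξb.1
  have hua : M.u' (cstar b z) z < M.u' (cstar a z) z :=
    aux_u'_strictAntiOn M z (mem_Ioi.2 hca) (mem_Ioi.2 hcb) hξab
  -- the two integrands
  set ga : ℝ → ℝ → ℝ → Z → ℝ :=
    fun bb r y zh => bb * r * M.u' (cstar (r * (a - cstar a z) + y) zh) zh with hga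
  set gb : ℝ → ℝ → ℝ → Z → ℝ :=
    fun bb r y zh => bb * r * M.u' (cstar (r * (b - cstar b z) + y) zh) zh with hgb
  have hEzle : M.Ez ga z ≤ M.Ez gb z := by
    apply aux_Ez_mono
    intro zh ε
    rcases eq_or_lt_of_le (M.R_nonneg z zh ε) with hr | hr
    · rw [hga, hgb]; rw [← hr]; simp
    · set bb := M.β z zh ε with hbb
      set r := M.R z zh ε with hrr
      set y := M.Y z zh ε with hyy
      have hy : 0 ≤ y := M.Y_nonneg z zh ε
      have hxb : 0 < r * (b - cstar b z) + y := by positivity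
      have hxa : 0 < r * (a - cstar a z) + y := by positivity
      have hxle : r * (b - cstar b z) + y ≤ r * (a - cstar a z) + y := by nlinarith
      have hcle : cstar (r * (b - cstar b z) + y) zh ≤ cstar (r * (a - cstar a z) + y) zh :=
        hmono zh (mem_Ioi.2 hxb) (mem_Ioi.2 hxa) hxle
      have hcpos : 0 < cstar (r * (b - cstar b z) + y) zh := (hbound zh _ hxb).1
      have hcpos' : 0 < cstar (r * (a - cstar a z) + y) zh := (hbound zh _ hxa).1
      have hule : M.u' (cstar (r * (a - cstar a z) + y) zh) zh ≤
          M.u' (cstar (r * (b - cstar b z) + y) zh) zh := by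
        rcases eq_or_lt_of_le hcle with heq | hclt
        · rw [heq]
        · exact le_of_lt (aux_u'_strictAntiOn M zh (mem_Ioi.2 hcpos) (mem_Ioi.2 hcpos') hclt)
      apply ENNReal.ofReal_le_ofReal
      have hbr : 0 ≤ bb * r := mul_nonneg (M.β_nonneg z zh ε) (le_of_lt hr)
      exact mul_le_mul_of_nonneg_left hule hbr
  by_cases htop : M.Ez gb z = ⊤
  · -- then EzR gb z = 0 and the Euler equation at b forces zero savings at b
    have h0 : M.EzR gb z = 0 := by simp [SavingsModel.EzR, htop]
    rw [h0] at hEb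
    have hub : M.u' (cstar b z) z = M.u' b z := by
      rw [hEb]; exact max_eq_right (le_of_lt (M.u'_pos z b hb))
    have : cstar b z = b :=
      (aux_u'_strictAntiOn M z).injOn (mem_Ioi.2 hcb) (mem_Ioi.2 hb) hub
    linarith
  · have hEle : M.EzR ga z ≤ M.EzR gb z := ENNReal.toReal_mono htop hEzle
    have h1 : M.EzR gb z < M.u' (cstar a z) z := by
      calc M.EzR gb z ≤ max (M.EzR gb z) (M.u' b z) := le_max_left _ _
      _ = M.u' (cstar b z) z := hEb.symm
      _ < M.u' (cstar a z) z := hua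
    have h2 : M.EzR ga z < M.u' (cstar a z) z := lt_of_le_of_lt hEle h1
    have hua' : M.u' (cstar a z) z = M.u' a z := by
      rcases max_cases (M.EzR ga z) (M.u' a z) with ⟨h, _⟩ | ⟨h, _⟩
      · rw [hEa] at h2 ⊢; rw [h] at h2; exact absurd h2 (lt_irrefl _)
      · rw [hEa, h]
    have : cstar a z = a :=
      (aux_u'_strictAntiOn M z).injOn (mem_Ioi.2 hca) (mem_Ioi.2 ha) hua'
    linarith

end Aux
/-- Proposition (Monotonicity with respect to wealth): under Assumptions 1
and 2, the unique fixed point `c*` of the time iteration operator is such that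
both the optimal consumption `w ↦ c*(w,z)` and the optimal savings
`w ↦ w − c*(w,z)` are increasing in `w` for every `z`. -/
theorem optimal_consumption_and_savings_monotone
    {Z E : Type} [Fintype Z] [Nonempty Z] [DecidableEq Z] [MeasurableSpace E]
    (M : SavingsModel Z E)
    (h2i : M.Assumption2i) (h2ii : specRad M.K1 < 1)
    (cstar : ℝ → Z → ℝ) (hmem : cstar ∈ M.cC)
    (hfix : M.IsTimeIterOf cstar cstar) :
    ∀ z : Z, MonotoneOn (fun w => cstar w z) (Set.Ioi 0) ∧
      MonotoneOn (fun w => w - cstar w z) (Set.Ioi 0) := by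
  intro z
  refine ⟨hmem.2.1 z, ?_⟩
  intro a ha b hb hab'
  rw [mem_Ioi] at ha hb
  rcases eq_or_lt_of_le hab' with rfl | hab
  · exact le_refl _
  show a - cstar a z ≤ b - cstar b z
  by_cases hsb : 0 < b - cstar b z
  · exact aux_savings_step M cstar hmem hfix z a b ha hab hsb
  · push_neg at hsb
    have hsb0 : b - cstar b z = 0 := by
      have := (hmem.2.2.1 z b hb).2
      linarith
    by_contra hpos
    push_neg at hpos
    have hsa : 0 < a - cstar a z := by linarith
    -- by the intermediate value theorem find an intermediate wealth with
    -- small positive savings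
    have hscont : ContinuousOn (fun w => w - cstar w z) (Icc a b) := by
      apply ContinuousOn.sub continuousOn_id
      exact (hmem.1 z).mono fun x hx => mem_Ioi.2 (lt_of_lt_of_le ha hx.1)
    have hmemval : (a - cstar a z) / 2 ∈
      Icc ((fun w => w - cstar w z) b) ((fun w => w - cstar w z) a) := by
      constructor <;> simp only <;> linarith
    obtain ⟨w', hw', hsw'⟩ := intermediate_value_Icc' (le_of_lt hab) hscont hmemval
    have hw'pos : 0 < (a - cstar a z) / 2 := by linarith
    have haw' : a < w' := by
      rcases eq_or_lt_of_le hw'.1 with rfl | h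
      · exfalso; simp only at hsw'; linarith
      · exact h
    have hsw2 : w' - cstar w' z = (a - cstar a z) / 2 := hsw'
    have := aux_savings_step M cstar hmem hfix z a w' ha haw' (by rw [hsw2]; exact hw'pos)
    linarith
end

section
/- Under Assumption 1, the pair (𝒞, ρ) is a complete metric space: ρ is a metric on 𝒞, and every ρ-Cauchy sequence in 𝒞 converges in ρ to an element of 𝒞. -/
open Set Filter

section Aux
set_option linter.unusedSectionVars false
variable {Z : Type} [Nonempty Z] {u' : ℝ → Z → ℝ}

def candDistSet (u' : ℝ → Z → ℝ) (c₁ c₂ : ℝ → Z → ℝ) : Set ℝ :=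
  {x : ℝ | ∃ z : Z, ∃ w : ℝ, 0 < w ∧ x = |u' (c₁ w z) z - u' (c₂ w z) z|}

lemma candDistSet_nonempty (c₁ c₂ : ℝ → Z → ℝ) : (candDistSet u' c₁ c₂).Nonempty := by
  obtain ⟨z⟩ := ‹Nonempty Z›
  exact ⟨_, z, 1, one_pos, rfl⟩

lemma candDistSet_nonneg {c₁ c₂ : ℝ → Z → ℝ} {x : ℝ} (hx : x ∈ candDistSet u' c₁ c₂) :
    0 ≤ x := by
  obtain ⟨z, w, hw, rfl⟩ := hx; exact abs_nonneg _

lemma candDistSet_bddAbove {c₁ c₂ : ℝ → Z → ℝ}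
    (h₁ : ∃ B : ℝ, ∀ z, ∀ w : ℝ, 0 < w → |u' (c₁ w z) z - u' w z| ≤ B)
    (h₂ : ∃ B : ℝ, ∀ z, ∀ w : ℝ, 0 < w → |u' (c₂ w z) z - u' w z| ≤ B) :
    BddAbove (candDistSet u' c₁ c₂) := by
  obtain ⟨B₁, hB₁⟩ := h₁; obtain ⟨B₂, hB₂⟩ := h₂
  refine ⟨B₁ + B₂, fun x hx => ?_⟩
  obtain ⟨z, w, hw, rfl⟩ := hx
  calc |u' (c₁ w z) z - u' (c₂ w z) z|
      ≤ |u' (c₁ w z) z - u' w z| + |u' w z - u' (c₂ w z) z| := abs_sub_le _ _ _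
    _ ≤ B₁ + B₂ := by
        have := hB₂ z w hw
        rw [abs_sub_comm] at this
        exact add_le_add (hB₁ z w hw) this

end Aux

/-- The candidate class `𝒞` of consumption functions determined by the
marginal utility `u'`. -/
def candClass {Z : Type} (u' : ℝ → Z → ℝ) : Set (ℝ → Z → ℝ) :=
  {c | (∀ z, ContinuousOn (fun w => c w z) (Ioi 0)) ∧
    (∀ z, MonotoneOn (fun w => c w z) (Ioi 0)) ∧
    (∀ z, ∀ w : ℝ, 0 < w → 0 < c w z ∧ c w z ≤ w) ∧
    (∃ B : ℝ, ∀ z, ∀ w : ℝ, 0 < w → |u' (c w z) z - u' w z| ≤ B)}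

/-- The supremum distance `ρ` in marginal utility terms. -/
noncomputable def candDist {Z : Type} (u' : ℝ → Z → ℝ) (c₁ c₂ : ℝ → Z → ℝ) : ℝ :=
  sSup {x : ℝ | ∃ z : Z, ∃ w : ℝ, 0 < w ∧ x = |u' (c₁ w z) z - u' (c₂ w z) z|}

lemma candDist_eq {Z : Type} (u' : ℝ → Z → ℝ) (c₁ c₂ : ℝ → Z → ℝ) :
    candDist u' c₁ c₂ = sSup (candDistSet u' c₁ c₂) := rfl

/-- Proposition (completeness of `(𝒞, ρ)`): under Assumption 1, `ρ` is a
metric on `𝒞` (nonnegative, zero on the diagonal, separating points of `S₀`,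
symmetric, satisfying the triangle inequality), and every `ρ`-Cauchy sequence
in `𝒞` converges in `ρ` to an element of `𝒞`. -/
theorem candClass_complete_metric
    {Z : Type} [Fintype Z] [Nonempty Z]
    (u u' u'' : ℝ → Z → ℝ)
    (u_deriv : ∀ z, ∀ c : ℝ, 0 < c → HasDerivAt (fun x => u x z) (u' c z) c)
    (u'_deriv : ∀ z, ∀ c : ℝ, 0 < c → HasDerivAt (fun x => u' x z) (u'' c z) c)
    (u'_pos : ∀ z, ∀ c : ℝ, 0 < c → 0 < u' c z)
    (u''_neg : ∀ z, ∀ c : ℝ, 0 < c → u'' c z < 0)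
    (u'_infty : ∀ z, Tendsto (fun c => u' c z) (nhdsWithin 0 (Ioi 0)) atTop)
    (u'_lt_one : ∀ z, ∀ᶠ c in atTop, u' c z < 1) :
    (∀ c₁ ∈ candClass u', ∀ c₂ ∈ candClass u', 0 ≤ candDist u' c₁ c₂) ∧
    (∀ c ∈ candClass u', candDist u' c c = 0) ∧
    (∀ c₁ ∈ candClass u', ∀ c₂ ∈ candClass u',
      candDist u' c₁ c₂ = 0 → ∀ (z : Z) (w : ℝ), 0 < w → c₁ w z = c₂ w z) ∧
    (∀ c₁ ∈ candClass u', ∀ c₂ ∈ candClass u',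
      candDist u' c₁ c₂ = candDist u' c₂ c₁) ∧
    (∀ c₁ ∈ candClass u', ∀ c₂ ∈ candClass u', ∀ c₃ ∈ candClass u',
      candDist u' c₁ c₃ ≤ candDist u' c₁ c₂ + candDist u' c₂ c₃) ∧
    (∀ seq : ℕ → ℝ → Z → ℝ, (∀ n, seq n ∈ candClass u') →
      (∀ δ : ℝ, 0 < δ → ∃ N : ℕ, ∀ m ≥ N, ∀ n ≥ N, candDist u' (seq m) (seq n) < δ) →
      ∃ c ∈ candClass u', Tendsto (fun n => candDist u' (seq n) c) atTop (nhds 0)) := by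
  -- continuity of u' on (0, ∞)
  have hu'cont : ∀ z, ContinuousOn (fun c => u' c z) (Ioi 0) :=
    fun z x hx => (u'_deriv z x hx).continuousAt.continuousWithinAt
  -- strict antitonicity of u' on (0, ∞)
  have hanti : ∀ z, StrictAntiOn (fun c => u' c z) (Ioi 0) := by
    intro z
    refine strictAntiOn_of_deriv_neg (convex_Ioi 0) (hu'cont z) ?_
    intro x hx
    rw [interior_Ioi] at hx
    rw [(u'_deriv z x hx).deriv]
    exact u''_neg z x hx
  have hu'anti : ∀ z, ∀ {x y : ℝ}, 0 < x → 0 < y → x ≤ y → u' y z ≤ u' x z := by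
    intro z x y hx hy hxy
    rcases eq_or_lt_of_le hxy with rfl | h
    · exact le_refl _
    · exact le_of_lt (hanti z hx hy h)
  -- surjectivity of u' onto [u' w, ∞) on (0, w]
  have hsurj : ∀ z, ∀ w Lv : ℝ, 0 < w → u' w z ≤ Lv →
      ∃ x : ℝ, 0 < x ∧ x ≤ w ∧ u' x z = Lv := by
    intro z w Lv hw hLv
    have hA : ∀ᶠ c in nhdsWithin (0:ℝ) (Ioi 0), Lv ≤ u' c z :=
      (u'_infty z).eventually (eventually_ge_atTop Lv)
    have hB : Ioo (0:ℝ) w ∈ nhdsWithin (0:ℝ) (Ioi 0) :=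
      Ioo_mem_nhdsGT_of_mem (by simp [hw])
    obtain ⟨ε, hε1, hε2⟩ := (hA.and (eventually_of_mem hB (fun x hx => hx))).exists
    obtain ⟨hε0, hεw⟩ := hε2
    have hcont : ContinuousOn (fun c => u' c z) (Icc ε w) :=
      (hu'cont z).mono (fun x hx => lt_of_lt_of_le hε0 hx.1)
    have := intermediate_value_Icc' (le_of_lt hεw) hcont
    have hmem : Lv ∈ Icc (u' w z) (u' ε z) := ⟨hLv, hε1⟩
    obtain ⟨x, hx, hxeq⟩ := this hmem
    exact ⟨x, lt_of_lt_of_le hε0 hx.1, hx.2, hxeq⟩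
  refine ⟨?_, ?_, ?_, ?_, ?_, ?_⟩
  · -- nonnegativity
    intro c₁ _ c₂ _
    exact Real.sSup_nonneg (fun x hx => candDistSet_nonneg hx)
  · -- zero on the diagonal
    intro c _
    rw [candDist_eq]
    have hset : candDistSet u' c c = {0} := by
      ext x
      constructor
      · rintro ⟨z, w, hw, rfl⟩; simp
      · rintro rfl
        exact ⟨Classical.arbitrary Z, 1, one_pos, by simp⟩
    rw [hset, csSup_singleton]
  · -- separation
    intro c₁ hc₁ c₂ hc₂ h0 z w hw
    have hbdd : BddAbove (candDistSet u' c₁ c₂) :=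
      candDistSet_bddAbove hc₁.2.2.2 hc₂.2.2.2
    have hle : |u' (c₁ w z) z - u' (c₂ w z) z| ≤ candDist u' c₁ c₂ :=
      le_csSup hbdd ⟨z, w, hw, rfl⟩
    rw [h0] at hle
    have heq : u' (c₁ w z) z = u' (c₂ w z) z := by
      have := abs_nonneg (u' (c₁ w z) z - u' (c₂ w z) z)
      have : |u' (c₁ w z) z - u' (c₂ w z) z| = 0 := le_antisymm hle this
      have := abs_eq_zero.1 this
      linarith [sub_eq_zero.1 this]
    exact (hanti z).injOn (mem_Ioi.2 (hc₁.2.2.1 z w hw).1)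
      (mem_Ioi.2 (hc₂.2.2.1 z w hw).1) heq
  · -- symmetry
    intro c₁ _ c₂ _
    rw [candDist_eq, candDist_eq]
    congr 1
    ext x
    constructor
    · rintro ⟨z, w, hw, rfl⟩; exact ⟨z, w, hw, abs_sub_comm _ _⟩
    · rintro ⟨z, w, hw, rfl⟩; exact ⟨z, w, hw, abs_sub_comm _ _⟩
  · -- triangle
    intro c₁ hc₁ c₂ hc₂ c₃ hc₃
    rw [candDist_eq]
    refine csSup_le (candDistSet_nonempty _ _) ?_
    rintro x ⟨z, w, hw, rfl⟩
    have h12 : |u' (c₁ w z) z - u' (c₂ w z) z| ≤ candDist u' c₁ c₂ :=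
      le_csSup (candDistSet_bddAbove hc₁.2.2.2 hc₂.2.2.2) ⟨z, w, hw, rfl⟩
    have h23 : |u' (c₂ w z) z - u' (c₃ w z) z| ≤ candDist u' c₂ c₃ :=
      le_csSup (candDistSet_bddAbove hc₂.2.2.2 hc₃.2.2.2) ⟨z, w, hw, rfl⟩
    calc |u' (c₁ w z) z - u' (c₃ w z) z|
        ≤ |u' (c₁ w z) z - u' (c₂ w z) z| + |u' (c₂ w z) z - u' (c₃ w z) z| :=
          abs_sub_le _ _ _
      _ ≤ candDist u' c₁ c₂ + candDist u' c₂ c₃ := add_le_add h12 h23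
  · -- completeness
    intro seq hseq hcauchy
    have hbdd : ∀ m n, BddAbove (candDistSet u' (seq m) (seq n)) :=
      fun m n => candDistSet_bddAbove (hseq m).2.2.2 (hseq n).2.2.2
    have hptle : ∀ m n z, ∀ w : ℝ, 0 < w →
        |u' (seq m w z) z - u' (seq n w z) z| ≤ candDist u' (seq m) (seq n) :=
      fun m n z w hw => le_csSup (hbdd m n) ⟨z, w, hw, rfl⟩
    -- pointwise limits of marginal utilities
    have hLex : ∀ (w : ℝ) (z : Z), ∃ l : ℝ, 0 < w →
        Tendsto (fun n => u' (seq n w z) z) atTop (nhds l) := by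
      intro w z
      by_cases hw : 0 < w
      · have hcs : CauchySeq (fun n => u' (seq n w z) z) := by
          rw [Metric.cauchySeq_iff]
          intro ε hε
          obtain ⟨N, hN⟩ := hcauchy ε hε
          refine ⟨N, fun m hm n hn => ?_⟩
          rw [Real.dist_eq]
          exact lt_of_le_of_lt (hptle m n z w hw) (hN m hm n hn)
        obtain ⟨l, hl⟩ := cauchySeq_tendsto_of_complete hcs
        exact ⟨l, fun _ => hl⟩
      · exact ⟨0, fun h => absurd h hw⟩
    choose L hL using hLex
    -- uniform approximation
    have hunif : ∀ δ : ℝ, 0 < δ → ∃ N, ∀ n ≥ N, ∀ z, ∀ w : ℝ, 0 < w →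
        |u' (seq n w z) z - L w z| ≤ δ := by
      intro δ hδ
      obtain ⟨N, hN⟩ := hcauchy δ hδ
      refine ⟨N, fun n hn z w hw => ?_⟩
      have h1 : Tendsto (fun m => |u' (seq n w z) z - u' (seq m w z) z|) atTop
          (nhds (|u' (seq n w z) z - L w z|)) :=
        (tendsto_const_nhds.sub (hL w z hw)).abs
      refine le_of_tendsto h1 ?_
      filter_upwards [eventually_ge_atTop N] with m hm
      rw [abs_sub_comm]
      exact le_of_lt (lt_of_le_of_lt (hptle m n z w hw) (hN m hm n hn))
    -- L dominates u' w
    have hLge : ∀ z, ∀ w : ℝ, 0 < w → u' w z ≤ L w z := by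
      intro z w hw
      refine le_of_tendsto_of_tendsto' tendsto_const_nhds (hL w z hw) (fun n => ?_)
      exact hu'anti z ((hseq n).2.2.1 z w hw).1 hw ((hseq n).2.2.1 z w hw).2
    -- L is antitone in w
    have hLanti : ∀ z, ∀ w₁ : ℝ, 0 < w₁ → ∀ w₂ : ℝ, 0 < w₂ → w₁ ≤ w₂ →
        L w₂ z ≤ L w₁ z := by
      intro z w₁ hw₁ w₂ hw₂ hle
      refine le_of_tendsto_of_tendsto' (hL w₂ z hw₂) (hL w₁ z hw₁) (fun n => ?_)
      have hmono := (hseq n).2.1 z (mem_Ioi.2 hw₁) (mem_Ioi.2 hw₂) hle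
      exact hu'anti z ((hseq n).2.2.1 z w₁ hw₁).1 ((hseq n).2.2.1 z w₂ hw₂).1 hmono
    -- L is continuous on (0,∞)
    have hLcont : ∀ z, ContinuousOn (fun w => L w z) (Ioi 0) := by
      intro z
      have htu : TendstoUniformlyOn (fun n w => u' (seq n w z) z) (fun w => L w z)
          atTop (Ioi 0) := by
        rw [Metric.tendstoUniformlyOn_iff]
        intro ε hε
        obtain ⟨N, hN⟩ := hunif (ε/2) (half_pos hε)
        filter_upwards [eventually_ge_atTop N] with n hn w hw
        rw [Real.dist_eq, abs_sub_comm]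
        exact lt_of_le_of_lt (hN n hn z w hw) (half_lt_self hε)
      refine htu.continuousOn (Eventually.of_forall (fun n => ?_)).frequently
      exact (hu'cont z).comp ((hseq n).1 z)
        (fun w hw => mem_Ioi.2 ((hseq n).2.2.1 z w hw).1)
    -- define the candidate limit function
    have hcex : ∀ (w : ℝ) (z : Z), ∃ x : ℝ, 0 < w →
        (0 < x ∧ x ≤ w ∧ u' x z = L w z) := by
      intro w z
      by_cases hw : 0 < w
      · obtain ⟨x, hx⟩ := hsurj z w (L w z) hw (hLge z w hw)
        exact ⟨x, fun _ => hx⟩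
      · exact ⟨1, fun h => absurd h hw⟩
    choose cf hcf using hcex
    have hcpos : ∀ z, ∀ w : ℝ, 0 < w → 0 < cf w z ∧ cf w z ≤ w :=
      fun z w hw => ⟨(hcf w z hw).1, (hcf w z hw).2.1⟩
    have hcu' : ∀ z, ∀ w : ℝ, 0 < w → u' (cf w z) z = L w z :=
      fun z w hw => (hcf w z hw).2.2
    -- cf is monotone
    have hcmono : ∀ z, MonotoneOn (fun w => cf w z) (Ioi 0) := by
      intro z w₁ hw₁ w₂ hw₂ hle
      simp only [mem_Ioi] at hw₁ hw₂
      by_contra h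
      push_neg at h
      have h2 : u' (cf w₁ z) z < u' (cf w₂ z) z :=
        hanti z (mem_Ioi.2 (hcpos z w₂ hw₂).1) (mem_Ioi.2 (hcpos z w₁ hw₁).1) h
      rw [hcu' z w₁ hw₁, hcu' z w₂ hw₂] at h2
      exact absurd h2 (not_lt.2 (hLanti z w₁ hw₁ w₂ hw₂ hle))
    -- cf is continuous
    have hccont : ∀ z, ContinuousOn (fun w => cf w z) (Ioi 0) := by
      intro z
      rw [Metric.continuousOn_iff]
      intro w₀ hw₀ ε hε
      rw [mem_Ioi] at hw₀
      set c₀ := cf w₀ z with hc₀def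
      have hc₀pos : 0 < c₀ := (hcpos z w₀ hw₀).1
      set ε' := min (ε/2) (c₀/2) with hε'def
      have hε'pos : 0 < ε' := lt_min (half_pos hε) (half_pos hc₀pos)
      have hε'le : ε' ≤ c₀/2 := min_le_right _ _
      have hε'le' : ε' ≤ ε/2 := min_le_left _ _
      have h1 : 0 < c₀ - ε' := by linarith
      have h2 : u' c₀ z < u' (c₀ - ε') z :=
        hanti z (mem_Ioi.2 h1) (mem_Ioi.2 hc₀pos) (by linarith)
      have h3 : u' (c₀ + ε') z < u' c₀ z :=
        hanti z (mem_Ioi.2 hc₀pos) (mem_Ioi.2 (by linarith)) (by linarith)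
      have hu'c₀ : u' c₀ z = L w₀ z := hcu' z w₀ hw₀
      set η := min (u' (c₀ - ε') z - L w₀ z) (L w₀ z - u' (c₀ + ε') z) with hηdef
      have hηpos : 0 < η := lt_min (by rw [← hu'c₀]; linarith) (by rw [← hu'c₀]; linarith)
      obtain ⟨δ, hδpos, hδ⟩ := Metric.continuousOn_iff.1 (hLcont z) w₀ (mem_Ioi.2 hw₀) η hηpos
      refine ⟨δ, hδpos, fun w hw hwd => ?_⟩
      have hwpos : (0:ℝ) < w := hw
      have hLw := hδ w hw hwd
      rw [Real.dist_eq] at hLw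
      have habs := abs_lt.1 hLw
      have hη1 : η ≤ u' (c₀ - ε') z - L w₀ z := min_le_left _ _
      have hη2 : η ≤ L w₀ z - u' (c₀ + ε') z := min_le_right _ _
      have hlow : u' (c₀ + ε') z < L w z := by linarith
      have hhigh : L w z < u' (c₀ - ε') z := by linarith
      have hcw := hcu' z w hwpos
      have hb1 : c₀ - ε' < cf w z := by
        by_contra h
        push_neg at h
        have hcfpos := (hcpos z w hwpos).1
        have : u' (c₀ - ε') z ≤ u' (cf w z) z := by
          rcases eq_or_lt_of_le h with he | hl
          · rw [he]
          · exact le_of_lt (hanti z (mem_Ioi.2 hcfpos) (mem_Ioi.2 h1) hl)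
        rw [hcw] at this
        linarith
      have hb2 : cf w z < c₀ + ε' := by
        by_contra h
        push_neg at h
        have : u' (cf w z) z ≤ u' (c₀ + ε') z := by
          rcases eq_or_lt_of_le h with he | hl
          · rw [← he]
          · exact le_of_lt (hanti z (mem_Ioi.2 (by linarith : (0:ℝ) < c₀ + ε'))
              (mem_Ioi.2 (hcpos z w hwpos).1) hl)
        rw [hcw] at this
        linarith
      rw [Real.dist_eq, abs_lt]
      constructor <;> linarith
    -- marginal-utility bound for cf
    have hBex : ∃ B : ℝ, ∀ z, ∀ w : ℝ, 0 < w → |u' (cf w z) z - u' w z| ≤ B := by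
      obtain ⟨N, hN⟩ := hunif 1 one_pos
      obtain ⟨B₀, hB₀⟩ := (hseq N).2.2.2
      refine ⟨1 + B₀, fun z w hw => ?_⟩
      rw [hcu' z w hw]
      calc |L w z - u' w z|
          ≤ |L w z - u' (seq N w z) z| + |u' (seq N w z) z - u' w z| := abs_sub_le _ _ _
        _ ≤ 1 + B₀ := by
            have h1 := hN N (le_refl N) z w hw
            rw [abs_sub_comm] at h1
            exact add_le_add h1 (hB₀ z w hw)
    refine ⟨cf, ⟨hccont, hcmono, fun z w hw => hcpos z w hw, hBex⟩, ?_⟩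
    -- convergence
    rw [Metric.tendsto_atTop]
    intro ε hε
    obtain ⟨N, hN⟩ := hunif (ε/2) (half_pos hε)
    refine ⟨N, fun n hn => ?_⟩
    have hub : candDist u' (seq n) cf ≤ ε/2 := by
      rw [candDist_eq]
      refine csSup_le (candDistSet_nonempty _ _) ?_
      rintro x ⟨z, w, hw, rfl⟩
      rw [hcu' z w hw]
      exact hN n hn z w hw
    have hlb : 0 ≤ candDist u' (seq n) cf :=
      Real.sSup_nonneg (fun x hx => candDistSet_nonneg hx)
    rw [Real.dist_eq]
    rw [abs_of_nonneg (by simpa using hlb)]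
    simp only [sub_zero]
    linarith
end
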